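/- For every C > 0 there exist C' > 0 and δ > 0 such that for every a ∈ ℂ with 0 < |a| ≤ δ and every z ∈ ℂ with 0 < |z| < C·|a|^{2/3}, one has D_a(z) ≠ 0, D_a(R_a(z)) ≠ 0, and |R_a(R_a(z))| > C'/|a|^{1/3}. -/

import Mathlib

/-- The rational map `R_a` obtained from the Chebyshev–Halley method applied to `z^3-1`. -/
noncomputable def Ra (a z : ℂ) : ℂ :=
  (2*a*z^6 + (15 - a)*z^3 + (3 - a)) / (3*z^2*(5 - a + (1 + a)*z^3))

/-- The denominator of `R_a`. -/
noncomputable def Da (a z : ℂ) : ℂ := 3*z^2*(5 - a + (1 + a)*z^3)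

private lemma abs_add_ge (x y : ℂ) :
    ‖x‖ - ‖y‖ ≤ ‖x + y‖ := by
  have h := norm_add_le (x + y) (-y)
  rw [add_neg_cancel_right, norm_neg] at h
  linarith

private lemma abs_sub_le' (x y : ℂ) :
    ‖x - y‖ ≤ ‖x‖ + ‖y‖ := by
  have h := norm_add_le x (-y)
  simpa [sub_eq_add_neg] using h

/-- First application: for `|a| ≤ 1/2`, `0 < |z| ≤ 1/4`, the denominator is nonzero
and `|R_a(z)| ≥ 2/(21|z|²)`. -/
private lemma step1 (a z : ℂ) (ha : ‖a‖ ≤ 1/2) (hz0 : z ≠ 0)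
    (hz : ‖z‖ ≤ 1/4) :
    Da a z ≠ 0 ∧ 2 / (21 * ‖z‖ ^ 2) ≤ ‖Ra a z‖ := by
  have ht : 0 < ‖z‖ := norm_pos_iff.mpr hz0
  set t := ‖z‖ with htdef
  have h1a : ‖1 + a‖ ≤ 3/2 := by
    have := norm_add_le 1 a
    simp only [norm_one] at this; linarith
  have hz3 : ‖z^3‖ ≤ 1/64 := by
    rw [norm_pow]
    calc t^3 ≤ (1/4:ℝ)^3 := pow_le_pow_left₀ ht.le hz 3
    _ = 1/64 := by norm_num
  have hz6 : ‖z^6‖ ≤ 1/4096 := by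
    rw [norm_pow]
    calc t^6 ≤ (1/4:ℝ)^6 := pow_le_pow_left₀ ht.le hz 6
    _ = 1/4096 := by norm_num
  have h5a_lo : (9:ℝ)/2 ≤ ‖5 - a‖ := by
    have h := abs_add_ge 5 (-a)
    rw [norm_neg, ← sub_eq_add_neg] at h
    have : ‖(5:ℂ)‖ = 5 := by norm_num [Complex.norm_ofNat]
    rw [this] at h; linarith
  have h5a_hi : ‖5 - a‖ ≤ 11/2 := by
    have h := abs_sub_le' (5:ℂ) a
    have : ‖(5:ℂ)‖ = 5 := by norm_num [Complex.norm_ofNat]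
    rw [this] at h; linarith
  have h1az3 : ‖(1+a)*z^3‖ ≤ 3/128 := by
    rw [norm_mul]
    calc ‖1+a‖ * ‖z^3‖ ≤ (3/2) * (1/64) := by
          apply mul_le_mul h1a hz3 (norm_nonneg _) (by norm_num)
    _ = 3/128 := by norm_num
  have htail_lo : 2 ≤ ‖5 - a + (1 + a)*z^3‖ := by
    have h := abs_add_ge (5 - a) ((1+a)*z^3)
    linarith
  have htail_hi : ‖5 - a + (1 + a)*z^3‖ ≤ 7 := by
    have h := norm_add_le (5 - a) ((1+a)*z^3)
    linarith
  have htail_ne : (5 - a + (1 + a)*z^3) ≠ 0 := by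
    intro h; rw [h] at htail_lo; simp at htail_lo; linarith
  have hDne : Da a z ≠ 0 := by
    unfold Da
    exact mul_ne_zero (mul_ne_zero (by norm_num) (pow_ne_zero 2 hz0)) htail_ne
  refine ⟨hDne, ?_⟩
  have hDabs : ‖Da a z‖ = 3 * t^2 * ‖5 - a + (1 + a)*z^3‖ := by
    unfold Da
    rw [norm_mul, norm_mul, norm_pow]
    norm_num [Complex.norm_ofNat]
    exact Or.inl rfl
  have hDhi : ‖Da a z‖ ≤ 21 * t^2 := by
    rw [hDabs]
    nlinarith [sq_nonneg t]
  have hDpos : 0 < ‖Da a z‖ := by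
    rw [hDabs]; positivity
  -- numerator lower bound
  have h3a_lo : (5:ℝ)/2 ≤ ‖3 - a‖ := by
    have h := abs_add_ge 3 (-a)
    rw [norm_neg, ← sub_eq_add_neg] at h
    have : ‖(3:ℂ)‖ = 3 := by norm_num [Complex.norm_ofNat]
    rw [this] at h; linarith
  have h15a_hi : ‖15 - a‖ ≤ 31/2 := by
    have h := abs_sub_le' (15:ℂ) a
    have : ‖(15:ℂ)‖ = 15 := by norm_num [Complex.norm_ofNat]
    rw [this] at h; linarith
  have hrest : ‖2*a*z^6 + (15 - a)*z^3‖ ≤ 1/2 := by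
    have h := norm_add_le (2*a*z^6) ((15 - a)*z^3)
    have h1 : ‖2*a*z^6‖ ≤ 1/4096 := by
      rw [norm_mul, norm_mul]
      have : ‖(2:ℂ)‖ = 2 := by norm_num [Complex.norm_ofNat]
      rw [this]
      nlinarith [norm_nonneg (z^6), norm_nonneg a]
    have h2 : ‖(15 - a)*z^3‖ ≤ (31/2) * (1/64) := by
      rw [norm_mul]
      apply mul_le_mul h15a_hi hz3 (norm_nonneg _) (by norm_num)
    nlinarith
  have hnum_lo : 2 ≤ ‖2*a*z^6 + (15 - a)*z^3 + (3 - a)‖ := by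
    have heq : 2*a*z^6 + (15 - a)*z^3 + (3 - a)
        = (3 - a) + (2*a*z^6 + (15 - a)*z^3) := by ring
    rw [heq]
    have h := abs_add_ge (3 - a) (2*a*z^6 + (15 - a)*z^3)
    linarith
  have hRa : ‖Ra a z‖
      = ‖2*a*z^6 + (15 - a)*z^3 + (3 - a)‖ / ‖Da a z‖ := by
    rw [show Ra a z = (2*a*z^6 + (15 - a)*z^3 + (3 - a)) / Da a z from rfl, norm_div]
  rw [hRa]
  exact div_le_div₀ (norm_nonneg _) hnum_lo (by positivity) hDhi

/-- Second application: for `|a| ≤ 1/2`, `|w| ≥ 3`, `|a||w|³ ≥ 20`, the denominator is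
nonzero and `|R_a(w)| ≥ |a||w|/9`. -/
private lemma step2 (a w : ℂ) (ha : ‖a‖ ≤ 1/2)
    (hw : 3 ≤ ‖w‖)
    (hw20 : 20 ≤ ‖a‖ * ‖w‖ ^ 3) :
    Da a w ≠ 0 ∧ ‖a‖ * ‖w‖ / 9 ≤ ‖Ra a w‖ := by
  set W := ‖w‖ with hWdef
  have hW0 : 0 < W := by linarith
  have hw0 : w ≠ 0 := by
    intro h; rw [h] at hWdef; simp [hWdef] at hW0
  have hW27 : 27 ≤ W^3 := by
    calc (27:ℝ) = 3^3 := by norm_num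
    _ ≤ W^3 := pow_le_pow_left₀ (by norm_num) hw 3
  have h1a_lo : (1:ℝ)/2 ≤ ‖1 + a‖ := by
    have h := abs_add_ge 1 a
    simp only [norm_one] at h; linarith
  have h1a_hi : ‖1 + a‖ ≤ 3/2 := by
    have := norm_add_le 1 a
    simp only [norm_one] at this; linarith
  have h5a_hi : ‖5 - a‖ ≤ 11/2 := by
    have h := abs_sub_le' (5:ℂ) a
    have : ‖(5:ℂ)‖ = 5 := by norm_num [Complex.norm_ofNat]
    rw [this] at h; linarith
  have hw3 : ‖w^3‖ = W^3 := by rw [norm_pow]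
  have h1aw3_lo : (1:ℝ)/2 * W^3 ≤ ‖(1+a)*w^3‖ := by
    rw [norm_mul, hw3]
    apply mul_le_mul_of_nonneg_right h1a_lo (by positivity)
  have h1aw3_hi : ‖(1+a)*w^3‖ ≤ 3/2 * W^3 := by
    rw [norm_mul, hw3]
    apply mul_le_mul_of_nonneg_right h1a_hi (by positivity)
  have htail_lo : (1:ℝ)/4 * W^3 ≤ ‖5 - a + (1 + a)*w^3‖ := by
    have heq : 5 - a + (1 + a)*w^3 = (1+a)*w^3 + (5 - a) := by ring
    rw [heq]
    have h := abs_add_ge ((1+a)*w^3) (5 - a)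
    nlinarith
  have htail_hi : ‖5 - a + (1 + a)*w^3‖ ≤ 2 * W^3 := by
    have h := norm_add_le (5 - a) ((1+a)*w^3)
    nlinarith
  have htail_ne : (5 - a + (1 + a)*w^3) ≠ 0 := by
    intro h; rw [h] at htail_lo; simp at htail_lo; nlinarith
  have hDne : Da a w ≠ 0 := by
    unfold Da
    exact mul_ne_zero (mul_ne_zero (by norm_num) (pow_ne_zero 2 hw0)) htail_ne
  refine ⟨hDne, ?_⟩
  have hDabs : ‖Da a w‖ = 3 * W^2 * ‖5 - a + (1 + a)*w^3‖ := by
    unfold Da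
    rw [norm_mul, norm_mul, norm_pow]
    norm_num [Complex.norm_ofNat]
    exact Or.inl rfl
  have hDhi : ‖Da a w‖ ≤ 9 * W^5 := by
    rw [hDabs]
    nlinarith [sq_nonneg W]
  have hDpos : 0 < ‖Da a w‖ := by
    rw [hDabs]; nlinarith
  -- numerator lower bound
  set A := ‖a‖ with hAdef
  have hA0 : 0 ≤ A := norm_nonneg a
  have h2aw6 : ‖2*a*w^6‖ = 2 * A * W^6 := by
    rw [norm_mul, norm_mul, norm_pow]
    norm_num [Complex.norm_ofNat]
    rfl
  have h15a_hi : ‖15 - a‖ ≤ 16 := by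
    have h := abs_sub_le' (15:ℂ) a
    have : ‖(15:ℂ)‖ = 15 := by norm_num [Complex.norm_ofNat]
    rw [this] at h; linarith
  have h3a_hi : ‖3 - a‖ ≤ 4 := by
    have h := abs_sub_le' (3:ℂ) a
    have : ‖(3:ℂ)‖ = 3 := by norm_num [Complex.norm_ofNat]
    rw [this] at h; linarith
  have hrest : ‖(15 - a)*w^3 + (3 - a)‖ ≤ 16 * W^3 + 4 := by
    have h := norm_add_le ((15 - a)*w^3) (3 - a)
    have h2 : ‖(15 - a)*w^3‖ ≤ 16 * W^3 := by
      rw [norm_mul, hw3]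
      apply mul_le_mul_of_nonneg_right h15a_hi (by positivity)
    linarith
  have hnum_lo : A * W^6 ≤ ‖2*a*w^6 + (15 - a)*w^3 + (3 - a)‖ := by
    have heq : 2*a*w^6 + (15 - a)*w^3 + (3 - a)
        = 2*a*w^6 + ((15 - a)*w^3 + (3 - a)) := by ring
    rw [heq]
    have h := abs_add_ge (2*a*w^6) ((15 - a)*w^3 + (3 - a))
    rw [h2aw6] at h
    -- 2AW⁶ - (16W³+4) ≥ AW⁶  ⟸  AW⁶ ≥ 20W³ ≥ 16W³+4 (using AW³ ≥ 20, W³ ≥ 27 ≥ 1)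
    have key : 16 * W^3 + 4 ≤ A * W^6 := by nlinarith [hw20, hW27]
    linarith
  have hRa : ‖Ra a w‖
      = ‖2*a*w^6 + (15 - a)*w^3 + (3 - a)‖ / ‖Da a w‖ := by
    rw [show Ra a w = (2*a*w^6 + (15 - a)*w^3 + (3 - a)) / Da a w from rfl, norm_div]
  rw [hRa]
  have hdiv : A * W^6 / (9 * W^5)
      ≤ ‖2*a*w^6 + (15 - a)*w^3 + (3 - a)‖ / ‖Da a w‖ :=
    div_le_div₀ (norm_nonneg _) hnum_lo hDpos hDhi
  have heq2 : A * W^6 / (9 * W^5) = A * W / 9 := by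
    field_simp
  rwa [heq2] at hdiv

set_option maxHeartbeats 1000000 in
theorem stmt_16 (C : ℝ) (hC : 0 < C) :
    ∃ C' > (0:ℝ), ∃ δ > (0:ℝ), ∀ a : ℂ, 0 < ‖a‖ → ‖a‖ ≤ δ →
      ∀ z : ℂ, z ≠ 0 → ‖z‖ < C * ‖a‖ ^ ((2:ℝ)/3) →
        Da a z ≠ 0 ∧ Da a (Ra a z) ≠ 0 ∧
        C' / ‖a‖ ^ ((1:ℝ)/3) < ‖Ra a (Ra a z)‖ := by
  -- choose a small ε > 0
  obtain ⟨ε, hεpos, hε1, hε2, hε3, hε4⟩ :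
      ∃ ε : ℝ, 0 < ε ∧ C * ε^2 ≤ 1/4 ∧ 63*C^2*ε^4 ≤ 2 ∧ 185220*C^6*ε^9 ≤ 8 ∧ ε^3 ≤ 1/2 := by
    have key : ∀ (k c : ℝ) (n : ℕ), 0 < c →
        ∀ᶠ ε in nhdsWithin (0:ℝ) (Set.Ioi 0), k * ε^(n+1) ≤ c := by
      intro k c n hc
      have hcont : Continuous (fun ε : ℝ => k * ε^(n+1)) := by
        exact continuous_const.mul (continuous_pow (n+1))
      have ht : Filter.Tendsto (fun ε : ℝ => k * ε^(n+1)) (nhds 0) (nhds 0) := by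
        have h := hcont.tendsto (0:ℝ)
        simpa using h
      have := ht.mono_left (nhdsWithin_le_nhds (s := Set.Ioi (0:ℝ)))
      filter_upwards [this.eventually (eventually_le_nhds hc)] with x hx using hx
    have h0 : ∀ᶠ ε in nhdsWithin (0:ℝ) (Set.Ioi 0), 0 < ε :=
      eventually_mem_nhdsWithin
    have h1 := key C (1/4) 1 (by norm_num)
    have h2 := key (63*C^2) 2 3 (by norm_num)
    have h3 := key (185220*C^6) 8 8 (by norm_num)
    have h4 := key 1 (1/2) 2 (by norm_num)
    obtain ⟨ε, he0, he1, he2, he3, he4⟩ := (h0.and (h1.and (h2.and (h3.and h4)))).exists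
    exact ⟨ε, he0, he1, he2, he3, by linarith⟩
  refine ⟨1/(189*C^2), by positivity, ε^3, by positivity, ?_⟩
  intro a ha hale z hz0 hzlt
  set s := ‖a‖ ^ ((1:ℝ)/3) with hsdef
  have hs_pos : 0 < s := Real.rpow_pos_of_pos ha _
  have hs3 : s^3 = ‖a‖ := by
    rw [hsdef, ← Real.rpow_natCast (‖a‖ ^ ((1:ℝ)/3)) 3,
      ← Real.rpow_mul (norm_nonneg a)]
    norm_num
  have hs2 : ‖a‖ ^ ((2:ℝ)/3) = s^2 := by
    rw [hsdef, ← Real.rpow_natCast (‖a‖ ^ ((1:ℝ)/3)) 2,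
      ← Real.rpow_mul (norm_nonneg a)]
    norm_num
  have hsle : s ≤ ε := by
    have h : s^3 ≤ ε^3 := by rw [hs3]; exact hale
    exact le_of_pow_le_pow_left₀ (by norm_num) hεpos.le h
  have hzlt' : ‖z‖ < C * s^2 := by rwa [hs2] at hzlt
  have ha2 : ‖a‖ ≤ 1/2 := by
    rw [← hs3]
    calc s^3 ≤ ε^3 := pow_le_pow_left₀ hs_pos.le hsle 3
    _ ≤ 1/2 := hε4
  have hs2e : s^2 ≤ ε^2 := pow_le_pow_left₀ hs_pos.le hsle 2
  have hz4 : ‖z‖ ≤ 1/4 := by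
    have h := mul_le_mul_of_nonneg_left hs2e hC.le
    linarith
  obtain ⟨hD1, hR1⟩ := step1 a z ha2 hz0 hz4
  set w := Ra a z with hwdef
  set W := ‖w‖ with hWdef
  have ht : 0 < ‖z‖ := norm_pos_iff.mpr hz0
  -- W > 2/(21 C² s⁴)
  have hden_lt : 21 * ‖z‖ ^ 2 < 21 * C^2 * s^4 := by
    have h1 : ‖z‖ ^ 2 < (C * s^2)^2 := by
      apply pow_lt_pow_left₀ hzlt' ht.le
      norm_num
    nlinarith
  have hWlb : 2 / (21 * C^2 * s^4) < W := by
    have h := div_lt_div_of_pos_left (by norm_num : (0:ℝ) < 2) (by positivity) hden_lt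
    linarith
  have hlb_pos : 0 < 2 / (21 * C^2 * s^4) := by positivity
  -- W ≥ 3
  have hs4e : s^4 ≤ ε^4 := pow_le_pow_left₀ hs_pos.le hsle 4
  have hW3 : 3 ≤ W := by
    have haux : 63*C^2*s^4 ≤ 63*C^2*ε^4 :=
      mul_le_mul_of_nonneg_left hs4e (by positivity)
    have h63 : 63 * C^2 * s^4 ≤ 2 := by linarith
    have : (3:ℝ) ≤ 2 / (21 * C^2 * s^4) := by
      rw [le_div_iff₀ (by positivity)]
      nlinarith
    linarith
  -- |a| W³ ≥ 20
  have hs9e : s^9 ≤ ε^9 := pow_le_pow_left₀ hs_pos.le hsle 9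
  have hW20 : 20 ≤ ‖a‖ * W^3 := by
    have hcube : (2 / (21 * C^2 * s^4))^3 ≤ W^3 :=
      pow_le_pow_left₀ hlb_pos.le hWlb.le 3
    have hident : s^3 * (2 / (21 * C^2 * s^4))^3 = 8 / (9261 * C^6 * s^9) := by
      field_simp
      ring
    have h20 : (20:ℝ) ≤ 8 / (9261 * C^6 * s^9) := by
      rw [le_div_iff₀ (by positivity)]
      have haux : 185220*C^6*s^9 ≤ 185220*C^6*ε^9 :=
        mul_le_mul_of_nonneg_left hs9e (by positivity)
      nlinarith
    calc (20:ℝ) ≤ s^3 * (2 / (21 * C^2 * s^4))^3 := by rw [hident]; exact h20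
    _ ≤ s^3 * W^3 := by
        apply mul_le_mul_of_nonneg_left hcube (by positivity)
    _ = ‖a‖ * W^3 := by rw [hs3]
  obtain ⟨hD2, hR2⟩ := step2 a w ha2 hW3 hW20
  refine ⟨hD1, hD2, ?_⟩
  -- final computation
  have hfin1 : 1/(189*C^2) / s < s^3 * (2 / (21 * C^2 * s^4)) / 9 := by
    have hident : s^3 * (2 / (21 * C^2 * s^4)) / 9 = 2 / (189 * C^2 * s) := by
      field_simp
      ring
    rw [hident, div_div]
    rw [div_lt_div_iff₀ (by positivity) (by positivity)]
    nlinarith [mul_pos (mul_pos (by norm_num : (0:ℝ) < 189) (pow_pos hC 2)) hs_pos]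
  have hfin2 : s^3 * (2 / (21 * C^2 * s^4)) / 9 < s^3 * W / 9 := by
    have := mul_lt_mul_of_pos_left hWlb (by positivity : (0:ℝ) < s^3)
    linarith
  have hfin3 : s^3 * W / 9 = ‖a‖ * W / 9 := by rw [hs3]
  calc 1/(189*C^2) / s < s^3 * W / 9 := by linarith
  _ = ‖a‖ * W / 9 := hfin3
  _ ≤ ‖Ra a w‖ := hR2
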